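/- Let x, y, z be elements of the graph group G_F. If xy = x·y (i.e., |xy| = |x| + |y|) and yz = y·z (i.e., |yz| = |y| + |z|), then y is a segment of xyz. -/

import Mathlib

open Pointwise

namespace GraphGroupPaper

/-- The set of commutator relators: `gᵢ` and `gⱼ` commute for every pair of distinct
`i, j` with `{i,j} ∉ F`. -/
def Rels (k : ℕ) (F : Set (Sym2 (Fin k))) : Set (FreeGroup (Fin k)) :=
  {w | ∃ i j : Fin k, i ≠ j ∧ s(i, j) ∉ F ∧
      w = FreeGroup.of i * FreeGroup.of j * (FreeGroup.of i)⁻¹ * (FreeGroup.of j)⁻¹}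

/-- The graph group `G_F` with generators `g₁, …, g_k` and relations `gᵢgⱼ = gⱼgᵢ`
for all distinct `i, j` with `{i,j} ∉ F`. -/
abbrev Grp (k : ℕ) (F : Set (Sym2 (Fin k))) := PresentedGroup (Rels k F)

/-- The generator `gᵢ` of the graph group. -/
def gen (k : ℕ) (F : Set (Sym2 (Fin k))) (i : Fin k) : Grp k F :=
  PresentedGroup.of i

/-- The group element corresponding to a symbol: `(i, true)` stands for `gᵢ`,
`(i, false)` stands for `gᵢ⁻¹`. -/
def sym (k : ℕ) (F : Set (Sym2 (Fin k))) (α : Fin k × Bool) : Grp k F :=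
  if α.2 then gen k F α.1 else (gen k F α.1)⁻¹

/-- The product of the word `l` of symbols, as an element of the graph group. -/
def wordProd (k : ℕ) (F : Set (Sym2 (Fin k))) (l : List (Fin k × Bool)) : Grp k F :=
  (l.map (sym k F)).prod

/-- `|x|` : the length of a shortest word in the symbols representing `x`. -/
noncomputable def len {k : ℕ} {F : Set (Sym2 (Fin k))} (x : Grp k F) : ℕ :=
  sInf {n | ∃ l : List (Fin k × Bool), wordProd k F l = x ∧ l.length = n}

/-- The partial order on `G_F`:  `x ≤ y` iff `|y| = |x| + |x⁻¹y|`. -/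
def le {k : ℕ} {F : Set (Sym2 (Fin k))} (x y : Grp k F) : Prop :=
  len y = len x + len (x⁻¹ * y)

/-- `m` is the meet `x ∧ y` (greatest lower bound w.r.t. `le`). -/
def IsMeet {k : ℕ} {F : Set (Sym2 (Fin k))} (x y m : Grp k F) : Prop :=
  le m x ∧ le m y ∧ ∀ w, le w x → le w y → le w m

/-- `j` is the (finite) join `x ∨ y` (least upper bound w.r.t. `le`);
`x ∨ y` is finite iff such a `j` exists. -/
def IsJoin {k : ℕ} {F : Set (Sym2 (Fin k))} (x y j : Grp k F) : Prop :=
  le x j ∧ le y j ∧ ∀ w, le x w → le y w → le j w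

/-- `j` is the (finite) join of the set `S`. -/
def IsJoinSet {k : ℕ} {F : Set (Sym2 (Fin k))} (S : Set (Grp k F)) (j : Grp k F) : Prop :=
  (∀ s ∈ S, le s j) ∧ ∀ w, (∀ s ∈ S, le s w) → le j w

/-- `y` is a segment of `a` if `a = x·y·z` for some `x, z`. -/
def Segment {k : ℕ} {F : Set (Sym2 (Fin k))} (y a : Grp k F) : Prop :=
  ∃ x z, a = x * y * z ∧ len a = len x + len y + len z

/-- The left-invariant metric `dist(x,y) = |x⁻¹y|`. -/
noncomputable def dist {k : ℕ} {F : Set (Sym2 (Fin k))} (x y : Grp k F) : ℕ :=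
  len (x⁻¹ * y)

/-- A nonempty set `L` is convex if `x, z ∈ L` and `dist(x,y) + dist(y,z) = dist(x,z)`
imply `y ∈ L`. -/
def ConvexSet {k : ℕ} {F : Set (Sym2 (Fin k))} (L : Set (Grp k F)) : Prop :=
  L.Nonempty ∧ ∀ x z y : Grp k F, x ∈ L → z ∈ L →
    dist x y + dist y z = dist x z → y ∈ L

/-- An ideal: nonempty, downward closed, and closed under finite joins. -/
def IdealSet {k : ℕ} {F : Set (Sym2 (Fin k))} (I : Set (Grp k F)) : Prop :=
  I.Nonempty ∧ (∀ x ∈ I, ∀ y, le y x → y ∈ I) ∧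
    (∀ x ∈ I, ∀ y ∈ I, ∀ j, IsJoin x y j → j ∈ I)

/-- `H` is closed if both `H` and `H⁻¹` are ideals. -/
def ClosedSet {k : ℕ} {F : Set (Sym2 (Fin k))} (H : Set (Grp k F)) : Prop :=
  IdealSet H ∧ IdealSet H⁻¹

/-- `m` is a minimal element of `S` w.r.t. `le`. -/
def MinimalIn {k : ℕ} {F : Set (Sym2 (Fin k))} (S : Set (Grp k F)) (m : Grp k F) : Prop :=
  m ∈ S ∧ ∀ x ∈ S, le x m → x = m

/-- `l` is a reduced (i.e. shortest) word representing `x`. -/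
def MinWord {k : ℕ} {F : Set (Sym2 (Fin k))} (x : Grp k F) (l : List (Fin k × Bool)) : Prop :=
  wordProd k F l = x ∧ l.length = len x

open Classical in
/-- `#_α(x)`: the number of occurrences of the symbol `α` (not counting `α⁻¹`)
in a reduced word representing `x`. -/
noncomputable def symCount {k : ℕ} {F : Set (Sym2 (Fin k))} (α : Fin k × Bool)
    (x : Grp k F) : ℕ :=
  if h : ∃ l, MinWord x l then h.choose.count α else 0

/-- The symbol `α` occurs in `x`. -/
def Occurs {k : ℕ} {F : Set (Sym2 (Fin k))} (α : Fin k × Bool) (x : Grp k F) : Prop :=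
  0 < symCount α x

/-- `α` is a maximal symbol of `x`, i.e. `xα⁻¹ ≤ x`. -/
def MaxSym {k : ℕ} {F : Set (Sym2 (Fin k))} (α : Fin k × Bool) (x : Grp k F) : Prop :=
  le (x * (sym k F α)⁻¹) x

/-- A peak: an element with precisely one maximal symbol. -/
def IsPeak {k : ℕ} {F : Set (Sym2 (Fin k))} (p : Grp k F) : Prop :=
  ∃! α : Fin k × Bool, MaxSym α p

/-- An `α`-peak: a peak whose unique maximal symbol is `α`. -/
def AlphaPeak {k : ℕ} {F : Set (Sym2 (Fin k))} (α : Fin k × Bool) (p : Grp k F) : Prop :=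
  MaxSym α p ∧ ∀ β, MaxSym β p → β = α

/-- The set of generator indices occurring in `b`. -/
def Support {k : ℕ} {F : Set (Sym2 (Fin k))} (b : Grp k F) : Set (Fin k) :=
  {i | Occurs (i, true) b ∨ Occurs (i, false) b}

/-- `b` is connected: the generators occurring in `b` induce a connected subgraph of
the graph `([k], F)`. -/
def Conn {k : ℕ} {F : Set (Sym2 (Fin k))} (b : Grp k F) : Prop :=
  (SimpleGraph.induce (Support b) (SimpleGraph.fromEdgeSet F)).Connected

/-- `b` is cyclically reduced: `b ∧ b⁻¹ = 1`. -/
def CycRed {k : ℕ} {F : Set (Sym2 (Fin k))} (b : Grp k F) : Prop :=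
  IsMeet b b⁻¹ 1

section Machine

variable {k : ℕ} {F : Set (Sym2 (Fin k))}

/-- dependence of indices: equal or joined by an edge of `F` (non-commuting). -/
def dep (F : Set (Sym2 (Fin k))) (i j : Fin k) : Prop := i = j ∨ s(i, j) ∈ F

/-- formal inverse of a letter. -/
def linv (α : Fin k × Bool) : Fin k × Bool := (α.1, !α.2)

/-- the two letters commute. -/
def lcomm (F : Set (Sym2 (Fin k))) (α β : Fin k × Bool) : Prop := ¬ dep F α.1 β.1

lemma dep_refl (i : Fin k) : dep F i i := Or.inl rfl

lemma dep_symm {i j : Fin k} (h : dep F i j) : dep F j i := by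
  rcases h with h | h
  · exact Or.inl h.symm
  · exact Or.inr (by rwa [Sym2.eq_swap])

lemma linv_linv (α : Fin k × Bool) : linv (linv α) = α := by
  simp [linv]

lemma linv_fst (α : Fin k × Bool) : (linv α).1 = α.1 := rfl

/-! ### wordProd basics -/

lemma wordProd_nil : wordProd k F [] = 1 := rfl

lemma wordProd_cons (α : Fin k × Bool) (l : List (Fin k × Bool)) :
    wordProd k F (α :: l) = sym k F α * wordProd k F l := by
  simp [wordProd]

lemma wordProd_append (l₁ l₂ : List (Fin k × Bool)) :
    wordProd k F (l₁ ++ l₂) = wordProd k F l₁ * wordProd k F l₂ := by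
  simp [wordProd]

lemma wordProd_singleton (α : Fin k × Bool) : wordProd k F [α] = sym k F α := by
  simp [wordProd]

lemma sym_linv (α : Fin k × Bool) : sym k F (linv α) = (sym k F α)⁻¹ := by
  cases α with
  | mk i b => cases b <;> simp [sym, linv]

lemma commute_gen {i j : Fin k} (hij : i ≠ j) (hF : s(i, j) ∉ F) :
    Commute (gen k F i) (gen k F j) := by
  have h1 : PresentedGroup.mk (Rels k F)
      (FreeGroup.of i * FreeGroup.of j * (FreeGroup.of i)⁻¹ * (FreeGroup.of j)⁻¹) = 1 :=
    (QuotientGroup.eq_one_iff _).mpr (Subgroup.subset_normalClosure ⟨i, j, hij, hF, rfl⟩)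
  have h2 : gen k F i * gen k F j * (gen k F i)⁻¹ * (gen k F j)⁻¹ = 1 := by
    simpa [gen, PresentedGroup.of, map_mul] using h1
  exact commutatorElement_eq_one_iff_commute.mp h2

lemma commute_sym {α β : Fin k × Bool} (h : lcomm F α β) :
    Commute (sym k F α) (sym k F β) := by
  have h' : α.1 ≠ β.1 ∧ s(α.1, β.1) ∉ F := by
    by_contra hc
    push_neg at hc
    rcases Classical.em (α.1 = β.1) with he | he
    · exact h (Or.inl he)
    · exact h (Or.inr (hc he))
  have hg : Commute (gen k F α.1) (gen k F β.1) := commute_gen h'.1 h'.2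
  cases hα : α.2 <;> cases hβ : β.2 <;> simp [sym, hα, hβ] <;>
    first
      | exact hg
      | exact hg.inv_left
      | exact hg.inv_right
      | exact hg.inv_left.inv_right

lemma commute_sym_wordProd {α : Fin k × Bool} {b : List (Fin k × Bool)}
    (h : ∀ β ∈ b, lcomm F α β) : Commute (sym k F α) (wordProd k F b) := by
  induction b with
  | nil => simpa [wordProd_nil] using Commute.one_right _
  | cons x t ih =>
      rw [wordProd_cons]
      exact (commute_sym (h x (by simp))).mul_right (ih fun β hβ => h β (by simp [hβ]))

/-! ### len basics -/

lemma wordProd_eq_mk (l : List (Fin k × Bool)) :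
    wordProd k F l = PresentedGroup.mk (Rels k F) (FreeGroup.mk l) := by
  induction l with
  | nil =>
      have : (FreeGroup.mk [] : FreeGroup (Fin k)) = 1 := rfl
      rw [wordProd_nil, this, map_one]
  | cons x t ih =>
      have hx : (FreeGroup.mk [x] : FreeGroup (Fin k)) * FreeGroup.mk t = FreeGroup.mk (x :: t) := by
        rw [FreeGroup.mul_mk]; rfl
      rw [wordProd_cons, ih, ← hx, map_mul]
      congr 1
      cases x with
      | mk i b =>
        cases b
        · have : (FreeGroup.mk [(i, false)] : FreeGroup (Fin k)) = (FreeGroup.of i)⁻¹ := by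
            show _ = (FreeGroup.mk [(i, true)])⁻¹
            rw [FreeGroup.inv_mk]; rfl
          rw [this, map_inv]
          simp [sym, gen, PresentedGroup.of]
        · have : (FreeGroup.mk [(i, true)] : FreeGroup (Fin k)) = FreeGroup.of i := rfl
          rw [this]
          simp [sym, gen, PresentedGroup.of]

lemma exists_word (g : Grp k F) : ∃ l, wordProd k F l = g := by
  obtain ⟨z, rfl⟩ := PresentedGroup.mk_surjective (Rels k F) g
  exact ⟨z.toWord, by rw [wordProd_eq_mk, FreeGroup.mk_toWord]⟩

lemma len_le {l : List (Fin k × Bool)} {g : Grp k F} (h : wordProd k F l = g) :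
    len g ≤ l.length := Nat.sInf_le ⟨l, h, rfl⟩

lemma exists_minWord (g : Grp k F) : ∃ l, wordProd k F l = g ∧ l.length = len g := by
  have hne : {n | ∃ l : List (Fin k × Bool), wordProd k F l = g ∧ l.length = n}.Nonempty := by
    obtain ⟨l, hl⟩ := exists_word g
    exact ⟨l.length, l, hl, rfl⟩
  obtain ⟨l, hl, hlen⟩ := Nat.sInf_mem hne
  exact ⟨l, hl, hlen⟩

lemma len_mul_le (a b : Grp k F) : len (a * b) ≤ len a + len b := by
  obtain ⟨la, hla, hna⟩ := exists_minWord a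
  obtain ⟨lb, hlb, hnb⟩ := exists_minWord b
  have : wordProd k F (la ++ lb) = a * b := by rw [wordProd_append, hla, hlb]
  simpa [← hna, ← hnb] using len_le this

lemma len_sym_le (α : Fin k × Bool) : len (sym k F α) ≤ 1 := by
  simpa using len_le (wordProd_singleton α)

/-! ### reduced words -/

def DelPair (F : Set (Sym2 (Fin k))) (u : List (Fin k × Bool)) : Prop :=
  ∃ a α b c, (∀ β ∈ b, lcomm F α β) ∧ u = a ++ [α] ++ b ++ [linv α] ++ c

def Red (F : Set (Sym2 (Fin k))) (u : List (Fin k × Bool)) : Prop := ¬ DelPair F u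

lemma wordProd_delPair {a b c : List (Fin k × Bool)} {α : Fin k × Bool}
    (h : ∀ β ∈ b, lcomm F α β) :
    wordProd k F (a ++ [α] ++ b ++ [linv α] ++ c) = wordProd k F (a ++ (b ++ c)) := by
  have hcom := commute_sym_wordProd h
  simp only [wordProd_append, wordProd_singleton, sym_linv]
  rw [mul_assoc (wordProd k F a) (sym k F α) (wordProd k F b), hcom.eq,
    ← mul_assoc (wordProd k F a) (wordProd k F b) (sym k F α),
    mul_assoc (wordProd k F a * wordProd k F b) (sym k F α) ((sym k F α)⁻¹),
    mul_inv_cancel, mul_one, mul_assoc]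

lemma exists_red_minWord (g : Grp k F) :
    ∃ l, wordProd k F l = g ∧ l.length = len g ∧ Red F l := by
  obtain ⟨l, hl, hlen⟩ := exists_minWord g
  refine ⟨l, hl, hlen, fun hdel => ?_⟩
  obtain ⟨a, α, b, c, hcom, rfl⟩ := hdel
  have h1 : wordProd k F (a ++ (b ++ c)) = g := by rw [← wordProd_delPair hcom, hl]
  have h2 := len_le h1
  simp only [List.length_append, List.length_singleton] at hlen h2
  omega

lemma delPair_append {u v : List (Fin k × Bool)} (h : DelPair F u) : DelPair F (u ++ v) := by
  obtain ⟨a, α, b, c, hcom, rfl⟩ := h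
  exact ⟨a, α, b, c ++ v, hcom, by simp⟩

lemma lcomm_symm {α β : Fin k × Bool} (h : lcomm F α β) : lcomm F β α :=
  fun hd => h (dep_symm hd)

lemma lcomm_linv_left {α β : Fin k × Bool} (h : lcomm F α β) : lcomm F (linv α) β := h

lemma red_reverse {u : List (Fin k × Bool)} (h : Red F u) : Red F u.reverse := by
  intro hdel
  obtain ⟨a, α, b, c, hcom, heq⟩ := hdel
  apply h
  refine ⟨c.reverse, linv α, b.reverse, a.reverse, ?_, ?_⟩
  · intro β hβ
    exact lcomm_linv_left (hcom β (by simpa using hβ))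
  · have := congrArg List.reverse heq
    simpa [linv_linv, List.append_assoc] using this


/-! ### Pilings -/

abbrev Pil (k : ℕ) := Fin k → List (Option Bool)

def emptyP (k : ℕ) : Pil k := fun _ => []

open Classical in
noncomputable def entry (F : Set (Sym2 (Fin k))) (i : Fin k) (β : Fin k × Bool) :
    Option (Option Bool) :=
  if β.1 = i then some (some β.2) else if dep F i β.1 then some none else none

noncomputable def stk (F : Set (Sym2 (Fin k))) (u : List (Fin k × Bool)) : Pil k :=
  fun i => (u.reverse).filterMap (entry F i)

def PopC (F : Set (Sym2 (Fin k))) (α : Fin k × Bool) (p : Pil k) : Prop :=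
  (p α.1).head? = some (some (!α.2))

open Classical in
noncomputable def push (F : Set (Sym2 (Fin k))) (α : Fin k × Bool) (p : Pil k) : Pil k :=
  if PopC F α p then (fun j => if dep F α.1 j then (p j).tail else p j)
  else (fun j => if j = α.1 then some α.2 :: p j
    else if dep F α.1 j then none :: p j else p j)

lemma entry_self {i : Fin k} {β : Fin k × Bool} (h : β.1 = i) :
    entry F i β = some (some β.2) := by simp [entry, h]

lemma entry_eq_some_some {i : Fin k} {β : Fin k × Bool} {σ : Bool}
    (h : entry F i β = some (some σ)) : β = (i, σ) := by
  unfold entry at h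
  by_cases h1 : β.1 = i
  · simp only [h1, if_true] at h
    obtain ⟨rfl⟩ : β.2 = σ := by simpa using h
    exact Prod.ext h1 rfl
  · simp only [h1, if_false] at h
    by_cases h2 : dep F i β.1 <;> simp [h2] at h

lemma entry_eq_none_iff {i : Fin k} {β : Fin k × Bool} :
    entry F i β = none ↔ ¬ dep F i β.1 := by
  unfold entry
  by_cases h1 : β.1 = i
  · subst h1
    simp [dep_refl]
  · by_cases h2 : dep F i β.1 <;> simp [h1, h2]

lemma entry_dep {i : Fin k} {β : Fin k × Bool} (h1 : β.1 ≠ i) (h2 : dep F i β.1) :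
    entry F i β = some none := by simp [entry, h1, h2]

lemma alln_cons_append {L M : List (Option Bool)} (h : ∀ x ∈ L, x = none) :
    L ++ none :: M = none :: (L ++ M) := by
  induction L with
  | nil => rfl
  | cons a t ih =>
      have ha : a = none := h a (by simp)
      have ih' := ih (fun x hx => h x (by simp [hx]))
      simp only [List.cons_append, ih', ha]

lemma stk_append (u v : List (Fin k × Bool)) (i : Fin k) :
    stk F (u ++ v) i = stk F v i ++ stk F u i := by
  simp [stk, List.filterMap_append]

lemma stk_concat (u : List (Fin k × Bool)) (β : Fin k × Bool) (i : Fin k) :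
    stk F (u ++ [β]) i = (entry F i β).toList ++ stk F u i := by
  rw [stk_append]
  have h1 : stk F [β] i = (entry F i β).toList := by
    cases h : entry F i β <;> simp [stk, h]
  rw [h1]

lemma stk_singleton (β : Fin k × Bool) (i : Fin k) :
    stk F [β] i = (entry F i β).toList := by
  have := stk_concat (F := F) [] β i
  simpa [stk] using this

lemma head_stk {u : List (Fin k × Bool)} {i : Fin k} {v : Option Bool}
    (h : (stk F u i).head? = some v) :
    ∃ a β c, u = a ++ [β] ++ c ∧ entry F i β = some v ∧ ∀ γ ∈ c, entry F i γ = none := by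
  obtain ⟨t, ht⟩ : ∃ t, stk F u i = v :: t := by
    cases hl : stk F u i with
    | nil => rw [hl] at h; simp at h
    | cons x t => rw [hl] at h; simp at h; exact ⟨t, by rw [h]⟩
  rw [stk] at ht
  rw [List.filterMap_eq_cons_iff] at ht
  obtain ⟨l₁, β, l₂, hrev, hl₁, hβ, -⟩ := ht
  refine ⟨l₂.reverse, β, l₁.reverse, ?_, hβ, ?_⟩
  · have := congrArg List.reverse hrev
    simpa [List.append_assoc] using this
  · intro γ hγ
    exact hl₁ γ (by simpa using hγ)

lemma alln_stk {c : List (Fin k × Bool)} {i j : Fin k}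
    (hcd : ∀ γ ∈ c, ¬ dep F i γ.1) (hd : dep F i j) :
    ∀ x ∈ stk F c j, x = none := by
  intro x hx
  rw [stk, List.mem_filterMap] at hx
  obtain ⟨γ, hγ, hγx⟩ := hx
  rw [List.mem_reverse] at hγ
  by_cases h1 : γ.1 = j
  · exact absurd (h1 ▸ hd) (hcd γ hγ)
  · by_cases h2 : dep F j γ.1
    · rw [entry_dep h1 h2] at hγx
      simpa using hγx.symm
    · rw [entry_eq_none_iff.mpr h2] at hγx
      simp at hγx

lemma heads_none {u : List (Fin k × Bool)} {i j : Fin k} {σ : Bool}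
    (h : (stk F u i).head? = some (some σ)) (hd : dep F i j) (hne : j ≠ i) :
    (stk F u j).head? = some none := by
  obtain ⟨a, β, c, rfl, hβ, hc⟩ := head_stk h
  have hβi : β = (i, σ) := entry_eq_some_some hβ
  have hcd : ∀ γ ∈ c, ¬ dep F i γ.1 := fun γ hγ => entry_eq_none_iff.mp (hc γ hγ)
  have hstk : stk F (a ++ [β] ++ c) j = stk F c j ++ ((entry F j β).toList ++ stk F a j) := by
    rw [stk_append, stk_concat]
  subst hβi
  have hej : entry F j (i, σ) = some none := entry_dep (Ne.symm hne) (dep_symm hd)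
  rw [hstk, hej]
  have htl : (some (none : Option Bool)).toList ++ stk F a j = none :: stk F a j := rfl
  rw [htl, alln_cons_append (alln_stk hcd hd)]
  rfl

/-- if no pop, push appends. -/
lemma push_no_pop {u : List (Fin k × Bool)} {α : Fin k × Bool}
    (h : ¬ PopC F α (stk F u)) : push F α (stk F u) = stk F (u ++ [α]) := by
  funext j
  simp only [push, if_neg h]
  by_cases h1 : j = α.1
  · subst h1
    rw [if_pos rfl, stk_concat, entry_self rfl]
    rfl
  · rw [if_neg h1, stk_concat]
    by_cases h2 : dep F α.1 j
    · rw [if_pos h2, entry_dep (fun hh => h1 hh.symm) (dep_symm h2)]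
      rfl
    · rw [if_neg h2, entry_eq_none_iff.mpr (fun hh => h2 (dep_symm hh))]
      rfl

/-- pop decomposition. -/
lemma pop_decomp {u : List (Fin k × Bool)} {α : Fin k × Bool}
    (h : PopC F α (stk F u)) :
    ∃ a c, u = a ++ [linv α] ++ c ∧ ∀ γ ∈ c, ¬ dep F α.1 γ.1 := by
  obtain ⟨a, β, c, rfl, hβ, hc⟩ := head_stk h
  have hβi : β = (α.1, !α.2) := entry_eq_some_some hβ
  exact ⟨a, c, by rw [hβi]; rfl, fun γ hγ => entry_eq_none_iff.mp (hc γ hγ)⟩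

/-- the pop computation. -/
lemma push_pop {a c : List (Fin k × Bool)} {α : Fin k × Bool}
    (hc : ∀ γ ∈ c, ¬ dep F α.1 γ.1)
    (h : PopC F α (stk F (a ++ [linv α] ++ c))) :
    push F α (stk F (a ++ [linv α] ++ c)) = stk F (a ++ c) := by
  funext j
  simp only [push, if_pos h]
  have hstk : stk F (a ++ [linv α] ++ c) j
      = stk F c j ++ ((entry F j (linv α)).toList ++ stk F a j) := by
    rw [stk_append, stk_concat]
  by_cases h2 : dep F α.1 j
  · rw [if_pos h2, hstk, stk_append]
    by_cases h1 : j = α.1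
    · subst h1
      have hcnil : stk F c α.1 = [] := by
        simp only [stk]
        rw [List.filterMap_eq_nil_iff]
        intro γ hγ
        exact entry_eq_none_iff.mpr (hc γ (by simpa using hγ))
      rw [hcnil, entry_self (linv_fst α)]
      rfl
    · have he : entry F j (linv α) = some none := by
        apply entry_dep
        · rw [linv_fst]; exact fun hh => h1 hh.symm
        · rw [linv_fst]; exact dep_symm h2
      rw [he]
      have htl : (some (none : Option Bool)).toList ++ stk F a j = none :: stk F a j := rfl
      rw [htl, alln_cons_append (alln_stk (i := α.1) hc h2)]
      rfl
  · rw [if_neg h2, hstk, stk_append]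
    have he : entry F j (linv α) = none := by
      rw [entry_eq_none_iff, linv_fst]
      exact fun hh => h2 (dep_symm hh)
    rw [he]
    rfl

lemma concat_eq_concat {A B : List (Fin k × Bool)} {x y : Fin k × Bool}
    (h : A ++ [x] = B ++ [y]) : A = B ∧ x = y := by
  obtain ⟨h1, h2⟩ := List.append_inj' h rfl
  exact ⟨h1, by simpa using h2⟩

lemma delPair_concat_of_pop {u : List (Fin k × Bool)} {α : Fin k × Bool}
    (h : PopC F α (stk F u)) : DelPair F (u ++ [α]) := by
  obtain ⟨a, c, rfl, hc⟩ := pop_decomp h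
  refine ⟨a, linv α, c, [], fun β hβ => hc β hβ, ?_⟩
  simp [linv_linv]

lemma pop_of_delPair_concat {u : List (Fin k × Bool)} {α : Fin k × Bool}
    (hu : Red F u) (h : DelPair F (u ++ [α])) : PopC F α (stk F u) := by
  obtain ⟨a, γ, b, c, hcom, heq⟩ := h
  rcases List.eq_nil_or_concat c with rfl | ⟨c', x, rfl⟩
  · -- c = [], so linv γ = α and u = a ++ [γ] ++ b
    rw [List.append_nil] at heq
    have heq' : (a ++ [γ] ++ b) ++ [linv γ] = u ++ [α] := by
      simpa [List.append_assoc] using heq.symm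
    obtain ⟨h1, h2⟩ := concat_eq_concat heq'
    have hγ : γ = linv α := by rw [← h2, linv_linv]
    subst hγ
    -- PopC
    unfold PopC
    rw [← h1, stk_append, stk_concat]
    have hb : stk F b α.1 = [] := by
      simp only [stk]
      rw [List.filterMap_eq_nil_iff]
      intro β hβ
      exact entry_eq_none_iff.mpr (hcom β (by simpa using hβ))
    rw [hb, entry_self (linv_fst α)]
    simp [linv, Bool.not_not]
  · -- pair inside u
    exfalso
    apply hu
    have heq' : (a ++ [γ] ++ b ++ [linv γ] ++ c') ++ [x] = u ++ [α] := by
      simpa [List.append_assoc, List.concat_eq_append] using heq.symm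
    obtain ⟨h1, -⟩ := concat_eq_concat heq'
    exact ⟨a, γ, b, c', hcom, h1.symm⟩

lemma red_concat_of_not_pop {u : List (Fin k × Bool)} {α : Fin k × Bool}
    (hu : Red F u) (h : ¬ PopC F α (stk F u)) : Red F (u ++ [α]) :=
  fun hd => h (pop_of_delPair_concat hu hd)

/-- deleting the letter `δ` whose whole right part is independent preserves reducedness. -/
lemma red_mid_del {a c : List (Fin k × Bool)} {δ : Fin k × Bool}
    (hred : Red F (a ++ [δ] ++ c)) (hc : ∀ γ ∈ c, ¬ dep F δ.1 γ.1) :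
    Red F (a ++ c) := by
  intro hdel
  apply hred
  obtain ⟨A, γ, B, C, hcom, heq⟩ := hdel
  -- a ++ c = A ++ [γ] ++ B ++ [linv γ] ++ C
  rw [List.append_assoc A, List.append_assoc A, List.append_assoc A] at heq
  rcases List.append_eq_append_iff.mp heq with ⟨t, hA, hc'⟩ | ⟨t, ha, ht⟩
  · -- A = a ++ t, c = t ++ [γ] ++ B ++ [linv γ] ++ C : pair inside c
    refine ⟨a ++ [δ] ++ t, γ, B, C, hcom, ?_⟩
    rw [hc']
    simp [List.append_assoc]
  · -- a = A ++ t, [γ] ++ (B ++ [linv γ] ++ C) = t ++ c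
    rcases t with _ | ⟨γ', t'⟩
    · -- t = [] : c = [γ] ++ ...
      simp only [List.nil_append] at ht
      rw [List.append_nil] at ha
      refine ⟨a ++ [δ], γ, B, C, hcom, ?_⟩
      rw [ha, ← ht]
      simp [List.append_assoc]
    · -- t = γ :: t'
      have hγ' : γ = γ' := by
        have := congrArg (fun l => l.head?) ht
        simpa using this
      subst hγ'
      have ht' : B ++ ([linv γ] ++ C) = t' ++ c := by
        have := congrArg List.tail ht
        simpa [List.append_assoc] using this
      rcases List.append_eq_append_iff.mp ht' with ⟨s, hB, hsc⟩ | ⟨s, hb, hs⟩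
      · -- t' = B ++ s, [linv γ] ++ C = s ++ c
        rcases s with _ | ⟨γ'', s'⟩
        · -- s = [] : c = linv γ :: C, pair straddles δ
          simp only [List.nil_append] at hsc
          rw [List.append_nil] at hB
          refine ⟨A, γ, B ++ [δ], C, ?_, ?_⟩
          · intro β hβ
            rcases List.mem_append.mp hβ with hβ | hβ
            · exact hcom β hβ
            · -- β = δ : lcomm γ δ since linv γ ∈ c
              have hmem : linv γ ∈ c := by rw [← hsc]; simp
              have := hc _ hmem
              rw [linv_fst] at this
              have hβδ : β = δ := by simpa using hβ
              subst hβδ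
              exact fun hd => this (dep_symm hd)
          · rw [ha, hB, ← hsc]
            simp [List.append_assoc]
        · -- s = linv γ :: s' : pair inside a
          have hγ'' : linv γ = γ'' := by
            have := congrArg (fun l => l.head?) hsc
            simpa using this
          rw [← hγ''] at hsc
          refine ⟨A, γ, B, s' ++ ([δ] ++ c), hcom, ?_⟩
          rw [ha, hB, ← hγ'']
          simp [List.append_assoc]
      · -- B = t' ++ s, c = s ++ [linv γ] ++ C : pair straddles δ
        refine ⟨A, γ, t' ++ [δ] ++ s, C, ?_, ?_⟩
        · intro β hβ
          have hβ' : β ∈ t' ∨ β = δ ∨ β ∈ s := by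
            simpa [List.append_assoc] using hβ
          rcases hβ' with h1 | h1 | h1
          · exact hcom β (by rw [hb]; exact List.mem_append.mpr (Or.inl h1))
          · subst h1
            have hmem : linv γ ∈ c := by rw [hs]; simp
            have := hc _ hmem
            rw [linv_fst] at this
            exact fun hd => this (dep_symm hd)
          · exact hcom β (by rw [hb]; exact List.mem_append.mpr (Or.inr h1))
        · rw [ha, hs]
          simp [List.append_assoc]

/-- L1, append case. -/
lemma push_linv_push_append {u : List (Fin k × Bool)} {α : Fin k × Bool}
    (h : ¬ PopC F α (stk F u)) :
    push F (linv α) (push F α (stk F u)) = stk F u := by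
  rw [push_no_pop h]
  have hpc : PopC F (linv α) (stk F (u ++ [α])) := by
    unfold PopC
    rw [linv_fst, stk_concat, entry_self rfl]
    simp [linv, Bool.not_not]
  funext j
  simp only [push, if_pos hpc]
  rw [linv_fst]
  by_cases h2 : dep F α.1 j
  · rw [if_pos h2, stk_concat]
    by_cases h1 : j = α.1
    · subst h1; rw [entry_self rfl]; rfl
    · rw [entry_dep (fun hh => h1 hh.symm) (dep_symm h2)]; rfl
  · rw [if_neg h2, stk_concat, entry_eq_none_iff.mpr (fun hh => h2 (dep_symm hh))]
    rfl

/-- L1, pop case. -/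
lemma push_linv_push_pop {u : List (Fin k × Bool)} {α : Fin k × Bool}
    (hred : Red F u) (h : PopC F α (stk F u)) :
    push F (linv α) (push F α (stk F u)) = stk F u := by
  obtain ⟨a, c, rfl, hc⟩ := pop_decomp h
  rw [push_pop hc h]
  have hnp : ¬ PopC F (linv α) (stk F (a ++ c)) := by
    intro hpc
    unfold PopC at hpc
    rw [linv_fst] at hpc
    have hcnil : stk F c α.1 = [] := by
      simp only [stk]
      rw [List.filterMap_eq_nil_iff]
      intro γ hγ
      exact entry_eq_none_iff.mpr (hc γ (by simpa using hγ))
    rw [stk_append, hcnil, List.nil_append] at hpc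
    obtain ⟨a₁, β, a₂, haeq, hβ, ha₂⟩ := head_stk (u := a) (i := α.1) hpc
    have hβα : α = β := by
      rw [entry_eq_some_some hβ]
      refine Prod.ext rfl ?_
      show α.2 = !(linv α).2
      simp [linv]
    subst hβα
    apply hred
    refine ⟨a₁, α, a₂, c, ?_, ?_⟩
    · exact fun β hβ' => entry_eq_none_iff.mp (ha₂ β hβ')
    · rw [haeq]
  rw [push_no_pop hnp]
  funext j
  have lhs : stk F (a ++ c ++ [linv α]) j
      = (entry F j (linv α)).toList ++ (stk F c j ++ stk F a j) := by
    rw [stk_concat, stk_append]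
  have rhs : stk F (a ++ [linv α] ++ c) j
      = stk F c j ++ ((entry F j (linv α)).toList ++ stk F a j) := by
    rw [stk_append, stk_concat]
  rw [lhs, rhs]
  by_cases h1 : j = α.1
  · subst h1
    have hcnil : stk F c α.1 = [] := by
      simp only [stk]
      rw [List.filterMap_eq_nil_iff]
      intro γ hγ
      exact entry_eq_none_iff.mpr (hc γ (by simpa using hγ))
    rw [hcnil]
    simp
  · by_cases h2 : dep F α.1 j
    · have he : entry F j (linv α) = some none := by
        apply entry_dep
        · rw [linv_fst]; exact fun hh => h1 hh.symm
        · rw [linv_fst]; exact dep_symm h2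
      rw [he]
      have halln := alln_stk (i := α.1) hc h2
      have htl1 : (some (none : Option Bool)).toList ++ (stk F c j ++ stk F a j)
          = none :: (stk F c j ++ stk F a j) := rfl
      have htl2 : stk F c j ++ ((some (none : Option Bool)).toList ++ stk F a j)
          = stk F c j ++ (none :: stk F a j) := rfl
      rw [htl1, htl2]
      exact (alln_cons_append halln).symm
    · have he : entry F j (linv α) = none := by
        rw [entry_eq_none_iff, linv_fst]
        exact fun hh => h2 (dep_symm hh)
      rw [he]
      simp

/-! ### commuting pushes -/

lemma push_pop_apply {p : Pil k} {α : Fin k × Bool} {j : Fin k}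
    (hp : PopC F α p) (hd : dep F α.1 j) : push F α p j = (p j).tail := by
  simp [push, hp, hd]

lemma push_app_self {p : Pil k} {α : Fin k × Bool}
    (hp : ¬ PopC F α p) : push F α p α.1 = some α.2 :: p α.1 := by
  simp [push, hp]

lemma push_app_dep {p : Pil k} {α : Fin k × Bool} {j : Fin k}
    (hp : ¬ PopC F α p) (hd : dep F α.1 j) (hj : j ≠ α.1) :
    push F α p j = none :: p j := by
  simp [push, hp, hj, hd]

lemma push_not_dep {p : Pil k} (α : Fin k × Bool) {j : Fin k}
    (h : ¬ dep F α.1 j) : push F α p j = p j := by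
  have hj : j ≠ α.1 := fun hh => h (by rw [hh]; exact dep_refl α.1)
  by_cases hp : PopC F α p <;> simp [push, hp, h, hj]

lemma popc_push {p : Pil k} {α β : Fin k × Bool}
    (h : ¬ dep F α.1 β.1) : PopC F β (push F α p) ↔ PopC F β p := by
  unfold PopC
  rw [push_not_dep α h]

lemma cons_head_of_some {l : List (Option Bool)} {x : Option Bool}
    (h : l.head? = some x) : l = x :: l.tail := by
  cases l with
  | nil => simp at h
  | cons a t =>
      have ha : a = x := by simpa using h
      rw [ha]
      rfl

lemma push_comm_aux {u : List (Fin k × Bool)} {α β : Fin k × Bool}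
    (hnd : ¬ dep F α.1 β.1) (hpa : PopC F α (stk F u)) (hnb : ¬ PopC F β (stk F u)) :
    push F α (push F β (stk F u)) = push F β (push F α (stk F u)) := by
  have hnd' : ¬ dep F β.1 α.1 := fun h => hnd (dep_symm h)
  have hpa' : PopC F α (push F β (stk F u)) := (popc_push hnd').mpr hpa
  have hnb' : ¬ PopC F β (push F α (stk F u)) := fun h => hnb ((popc_push hnd).mp h)
  funext j
  by_cases hda : dep F α.1 j
  · have hjβ : j ≠ β.1 := fun h => hnd (h ▸ hda)
    by_cases hdb : dep F β.1 j
    · -- shared stack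
      have hjα : j ≠ α.1 := fun h => hnd' (h ▸ hdb)
      rw [push_pop_apply hpa' hda, push_app_dep hnb hdb hjβ,
        push_app_dep hnb' hdb hjβ, push_pop_apply hpa hda]
      rw [List.tail_cons]
      exact cons_head_of_some (heads_none hpa hda hjα)
    · rw [push_pop_apply hpa' hda, push_not_dep β hdb, push_not_dep β hdb,
        push_pop_apply hpa hda]
  · rw [push_not_dep α hda]
    by_cases hdb : dep F β.1 j
    · by_cases hjβ : j = β.1
      · subst hjβ
        rw [push_app_self hnb, push_app_self hnb', push_not_dep α hda]
      · rw [push_app_dep hnb hdb hjβ, push_app_dep hnb' hdb hjβ, push_not_dep α hda]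
    · rw [push_not_dep β hdb, push_not_dep β hdb, push_not_dep α hda]

lemma push_comm {u : List (Fin k × Bool)} {α β : Fin k × Bool} (hco : lcomm F α β) :
    push F α (push F β (stk F u)) = push F β (push F α (stk F u)) := by
  have hnd : ¬ dep F α.1 β.1 := hco
  have hnd' : ¬ dep F β.1 α.1 := fun h => hnd (dep_symm h)
  by_cases hpa : PopC F α (stk F u) <;> by_cases hpb : PopC F β (stk F u)
  · -- both pop
    have hpa' : PopC F α (push F β (stk F u)) := (popc_push hnd').mpr hpa
    have hpb' : PopC F β (push F α (stk F u)) := (popc_push hnd).mpr hpb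
    funext j
    by_cases hda : dep F α.1 j <;> by_cases hdb : dep F β.1 j
    · rw [push_pop_apply hpa' hda, push_pop_apply hpb hdb,
        push_pop_apply hpb' hdb, push_pop_apply hpa hda]
    · rw [push_pop_apply hpa' hda, push_not_dep β hdb, push_not_dep β hdb,
        push_pop_apply hpa hda]
    · rw [push_not_dep α hda, push_pop_apply hpb hdb, push_pop_apply hpb' hdb,
        push_not_dep α hda]
    · rw [push_not_dep α hda, push_not_dep β hdb, push_not_dep β hdb,
        push_not_dep α hda]
  · exact push_comm_aux hnd hpa hpb
  · exact (push_comm_aux hnd' hpb hpa).symm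
  · -- both append
    have hpa' : ¬ PopC F α (push F β (stk F u)) := fun h => hpa ((popc_push hnd').mp h)
    have hpb' : ¬ PopC F β (push F α (stk F u)) := fun h => hpb ((popc_push hnd).mp h)
    funext j
    by_cases hda : dep F α.1 j
    · have hjβ : j ≠ β.1 := fun h => hnd (h ▸ hda)
      by_cases hjα : j = α.1
      · subst hjα
        rw [push_app_self hpa', push_not_dep β hnd', push_not_dep β hnd',
          push_app_self hpa]
      · by_cases hdb : dep F β.1 j
        · rw [push_app_dep hpa' hda hjα, push_app_dep hpb hdb hjβ,
            push_app_dep hpb' hdb hjβ, push_app_dep hpa hda hjα]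
        · rw [push_app_dep hpa' hda hjα, push_not_dep β hdb, push_not_dep β hdb,
            push_app_dep hpa hda hjα]
    · rw [push_not_dep α hda]
      by_cases hdb : dep F β.1 j
      · by_cases hjβ : j = β.1
        · subst hjβ
          rw [push_app_self hpb, push_app_self hpb', push_not_dep α hda]
        · rw [push_app_dep hpb hdb hjβ, push_app_dep hpb' hdb hjβ, push_not_dep α hda]
      · rw [push_not_dep β hdb, push_not_dep β hdb, push_not_dep α hda]

/-! ### the action and the key lemma -/

def InS (F : Set (Sym2 (Fin k))) (p : Pil k) : Prop := ∃ u, Red F u ∧ stk F u = p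

lemma red_nil : Red F ([] : List (Fin k × Bool)) := by
  rintro ⟨a, α, b, c, -, h⟩
  simp at h

lemma push_inS {p : Pil k} (hp : InS F p) (α : Fin k × Bool) : InS F (push F α p) := by
  obtain ⟨u, hr, rfl⟩ := hp
  by_cases h : PopC F α (stk F u)
  · obtain ⟨a, c, huu, hc⟩ := pop_decomp h
    subst huu
    refine ⟨a ++ c, ?_, (push_pop hc h).symm⟩
    apply red_mid_del hr
    intro γ hγ
    rw [linv_fst]
    exact hc γ hγ
  · exact ⟨u ++ [α], red_concat_of_not_pop hr h, (push_no_pop h).symm⟩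

lemma push_linv_push {u : List (Fin k × Bool)} {α : Fin k × Bool} (hr : Red F u) :
    push F (linv α) (push F α (stk F u)) = stk F u := by
  by_cases h : PopC F α (stk F u)
  · exact push_linv_push_pop hr h
  · exact push_linv_push_append h

noncomputable def pushE (F : Set (Sym2 (Fin k))) (α : Fin k × Bool) :
    Equiv.Perm {p : Pil k // InS F p} where
  toFun p := ⟨push F α p.1, push_inS p.2 α⟩
  invFun p := ⟨push F (linv α) p.1, push_inS p.2 (linv α)⟩
  left_inv p := by
    apply Subtype.ext
    obtain ⟨u, hr, heq⟩ := p.2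
    show push F (linv α) (push F α p.1) = p.1
    rw [← heq]
    exact push_linv_push hr
  right_inv p := by
    apply Subtype.ext
    obtain ⟨u, hr, heq⟩ := p.2
    show push F α (push F (linv α) p.1) = p.1
    rw [← heq]
    have := push_linv_push (α := linv α) (u := u) hr
    rwa [linv_linv] at this

lemma lcomm_of_ne_nmem {i j : Fin k} (hij : i ≠ j) (hF : s(i, j) ∉ F)
    {b b' : Bool} : lcomm F (i, b) (j, b') := by
  rintro (h | h)
  · exact hij h
  · exact hF h

lemma pushE_commute {i j : Fin k} (hij : i ≠ j) (hF : s(i, j) ∉ F) :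
    Commute (pushE F (i, true)) (pushE F (j, true)) := by
  apply Equiv.ext
  intro p
  apply Subtype.ext
  obtain ⟨u, hr, heq⟩ := p.2
  show push F (i, true) (push F (j, true) p.1) = push F (j, true) (push F (i, true) p.1)
  rw [← heq]
  exact push_comm (lcomm_of_ne_nmem hij hF)

open scoped commutatorElement in
lemma rels_one : ∀ r ∈ Rels k F,
    FreeGroup.lift (fun i => pushE F (i, true)) r = 1 := by
  rintro r ⟨i, j, hij, hF, rfl⟩
  have hc := pushE_commute (F := F) hij hF
  have : (⁅pushE F (i, true), pushE F (j, true)⁆ : Equiv.Perm {p : Pil k // InS F p}) = 1 :=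
    commutatorElement_eq_one_iff_commute.mpr hc
  simpa [commutatorElement_def, map_mul, map_inv] using this

noncomputable def phi : Grp k F →* Equiv.Perm {p : Pil k // InS F p} :=
  PresentedGroup.toGroup rels_one

lemma phi_sym (α : Fin k × Bool) : (phi (sym k F α) : Equiv.Perm {p : Pil k // InS F p})
    = pushE F α := by
  cases α with
  | mk i b =>
    cases b
    · have h1 : sym k F (i, false) = (gen k F i)⁻¹ := by simp [sym]
      rw [h1, map_inv]
      have h2 : (phi (gen k F i) : Equiv.Perm {p : Pil k // InS F p}) = pushE F (i, true) :=
        PresentedGroup.toGroup.of rels_one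
      rw [h2]
      apply Equiv.ext
      intro p
      rfl
    · have h1 : sym k F (i, true) = gen k F i := by simp [sym]
      rw [h1]
      exact PresentedGroup.toGroup.of rels_one

lemma phi_wordProd (w : List (Fin k × Bool)) (p : {p : Pil k // InS F p}) :
    (phi (wordProd k F w)) p = w.foldr (fun α q => pushE F α q) p := by
  induction w generalizing p with
  | nil => rw [wordProd_nil, map_one]; rfl
  | cons x t ih =>
      rw [wordProd_cons, map_mul, Equiv.Perm.mul_apply, ih, phi_sym]
      rfl

lemma foldr_push_val (w : List (Fin k × Bool)) (p : {p : Pil k // InS F p}) :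
    (w.foldr (fun α q => pushE F α q) p).val = w.foldr (fun α q => push F α q) p.val := by
  induction w with
  | nil => rfl
  | cons x t ih =>
      rw [List.foldr_cons, List.foldr_cons, ← ih]
      rfl

lemma foldl_push_red {u : List (Fin k × Bool)} (hr : Red F u) :
    List.foldl (fun q α => push F α q) (stk F []) u = stk F u := by
  induction u using List.reverseRecOn with
  | nil => rfl
  | append_singleton t α ih =>
      have hrt : Red F t := fun hd => hr (delPair_append hd)
      have hnp : ¬ PopC F α (stk F t) := fun hpc => hr (delPair_concat_of_pop hpc)
      rw [List.foldl_append]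
      simp only [List.foldl_cons, List.foldl_nil]
      rw [ih hrt, push_no_pop hnp]

noncomputable def emptyS : {p : Pil k // InS F p} := ⟨stk F [], ⟨[], red_nil, rfl⟩⟩

lemma phi_val {w : List (Fin k × Bool)} (hr : Red F w) :
    ((phi (wordProd k F w)) (emptyS (F := F))).val = stk F w.reverse := by
  rw [phi_wordProd, foldr_push_val]
  have h1 : w.foldr (fun α q => push F α q) (stk F []) =
      List.foldl (fun q α => push F α q) (stk F []) w.reverse := by
    rw [List.foldl_reverse]
  show w.foldr (fun α q => push F α q) (stk F []) = stk F w.reverse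
  rw [h1, foldl_push_red (red_reverse hr)]

def Tcnt (p : Pil k) : ℕ := ∑ i, ((p i).countP fun o => o.isSome)

lemma Tcnt_stk (u : List (Fin k × Bool)) : Tcnt (stk F u) = u.length := by
  induction u with
  | nil => simp [Tcnt, stk]
  | cons β t ih =>
      have hstk : ∀ i, stk F (β :: t) i = stk F t i ++ (entry F i β).toList := by
        intro i
        have : (β :: t) = [β] ++ t := rfl
        rw [this, stk_append, stk_singleton]
      have hsum : ∀ i, ((stk F (β :: t) i).countP fun o => o.isSome)
          = ((stk F t i).countP fun o => o.isSome)
            + (((entry F i β).toList).countP fun o => o.isSome) := by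
        intro i
        rw [hstk i, List.countP_append]
      unfold Tcnt
      rw [Finset.sum_congr rfl (fun i _ => hsum i), Finset.sum_add_distrib]
      have hone : (∑ i, (((entry F i β).toList).countP fun o => o.isSome)) = 1 := by
        rw [Finset.sum_eq_single_of_mem β.1 (Finset.mem_univ _)]
        · rw [entry_self rfl]
          rfl
        · intro b _ hb
          by_cases hd : dep F b β.1
          · rw [entry_dep (fun hh => hb hh.symm) hd]
            rfl
          · rw [entry_eq_none_iff.mpr hd]
            rfl
      rw [hone]
      have := ih
      unfold Tcnt at this
      rw [this]
      simp

/-- KEY LEMMA : a word longer than the length of the element it represents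
has a deletable pair. -/
lemma delPair_of_long {w : List (Fin k × Bool)} {g : Grp k F}
    (hw : wordProd k F w = g) (hl : len g < w.length) : DelPair F w := by
  by_contra hred
  obtain ⟨w₀, hw₀, hlen₀, hred₀⟩ := exists_red_minWord g
  have h1 : ((phi (wordProd k F w)) (emptyS (F := F))).val
      = ((phi (wordProd k F w₀)) (emptyS (F := F))).val := by
    rw [hw, hw₀]
  rw [phi_val hred, phi_val hred₀] at h1
  have h2 : Tcnt (stk F w.reverse) = Tcnt (stk F w₀.reverse) := by rw [h1]
  rw [Tcnt_stk, Tcnt_stk] at h2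
  simp only [List.length_reverse] at h2
  omega

/-! ### main construction -/

lemma len_lt_of_delPair {w : List (Fin k × Bool)} {h : Grp k F}
    (hd : DelPair F w) (hw : wordProd k F w = h) : len h + 2 ≤ w.length := by
  obtain ⟨a, α, b, c, hcom, rfl⟩ := hd
  have h1 : wordProd k F (a ++ (b ++ c)) = h := by rw [← wordProd_delPair hcom, hw]
  have h2 := len_le h1
  simp only [List.length_append, List.length_singleton] at h2 ⊢
  omega

lemma main_step {y x z : Grp k F}
    (hxy : len (x * y) = len x + len y) (hyz : len (y * z) = len y + len z)
    (hlt : len (x * y * z) < len x + len y + len z) :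
    ∃ x' z', x' * y * z' = x * y * z ∧ len x' + 1 ≤ len x ∧ len z' + 1 ≤ len z ∧
      len (x' * y) = len x' + len y ∧ len (y * z') = len y + len z' := by
  obtain ⟨wx, hwx, hlx, hrx⟩ := exists_red_minWord x
  obtain ⟨wy, hwy, hly, -⟩ := exists_red_minWord y
  obtain ⟨wz, hwz, hlz, -⟩ := exists_red_minWord z
  have hw : wordProd k F (wx ++ wy ++ wz) = x * y * z := by
    rw [wordProd_append, wordProd_append, hwx, hwy, hwz]
  have hlen : (wx ++ wy ++ wz).length = len x + len y + len z := by
    simp only [List.length_append, hlx, hly, hlz]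
  have hdel : DelPair F (wx ++ wy ++ wz) := delPair_of_long hw (by omega)
  obtain ⟨A, γ, B, C, hcom, heq⟩ := hdel
  -- contradiction helpers
  have hcxy : ¬ DelPair F (wx ++ wy) := by
    intro hd
    have h1 : wordProd k F (wx ++ wy) = x * y := by rw [wordProd_append, hwx, hwy]
    have h2 := len_lt_of_delPair hd h1
    simp only [List.length_append] at h2
    omega
  have hcyz : ¬ DelPair F (wy ++ wz) := by
    intro hd
    have h1 : wordProd k F (wy ++ wz) = y * z := by rw [wordProd_append, hwy, hwz]
    have h2 := len_lt_of_delPair hd h1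
    simp only [List.length_append] at h2
    omega
  -- locate the pair : γ in wx, linv γ in wz
  have heq1 : A ++ ([γ] ++ B ++ [linv γ] ++ C) = wx ++ (wy ++ wz) := by
    simpa only [← List.append_assoc] using heq.symm
  obtain ⟨b₁, b₃, hwxe, hwze, hBe⟩ :
      ∃ b₁ b₃, wx = A ++ [γ] ++ b₁ ∧ wz = b₃ ++ [linv γ] ++ C ∧ B = b₁ ++ wy ++ b₃ := by
    rcases List.append_eq_append_iff.mp heq1 with ⟨t, hA, ht⟩ | ⟨t, hwxt, ht⟩
    · -- wx = A ++ t
      rcases t with _ | ⟨γ', t'⟩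
      · -- t = [] : pair inside wy ++ wz
        exfalso
        apply hcyz
        refine ⟨[], γ, B, C, hcom, ?_⟩
        simp only [List.nil_append] at ht ⊢
        simpa only [← List.append_assoc] using ht.symm
      · have hγ' : γ = γ' := by
          have := congrArg (fun l => l.head?) ht
          simpa using this
        subst hγ'
        have ht' : B ++ ([linv γ] ++ C) = t' ++ (wy ++ wz) := by
          have := congrArg List.tail ht
          simpa [List.append_assoc] using this
        rcases List.append_eq_append_iff.mp ht' with ⟨s, hts, hs⟩ | ⟨s, hB, hs⟩
        · -- t' = B ++ s
          rcases s with _ | ⟨μ, s'⟩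
          · -- s = [] : wy ++ wz = linv γ :: C
            simp only [List.nil_append] at hs
            rw [List.append_nil] at hts
            rcases wy with _ | ⟨ν, wy'⟩
            · -- wy = [] : wz = linv γ :: C
              refine ⟨t', [], ?_, ?_, ?_⟩
              · rw [hA, hts]; simp
              · simpa using hs.symm
              · rw [hts]; simp
            · -- wy ≠ [] : pair inside wx ++ wy
              exfalso
              apply hcxy
              have hν : linv γ = ν := by
                have := congrArg (fun l => l.head?) hs
                simpa using this
              refine ⟨A, γ, t', wy', ?_, ?_⟩
              · intro β hβ
                exact hcom β (by rw [← hts]; exact hβ)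
              · rw [hA, ← hν]
                simp [List.append_assoc]
          · -- s = μ :: s' : pair inside wx
            exfalso
            have hμ : linv γ = μ := by
              have := congrArg (fun l => l.head?) hs
              simpa using this
            apply hrx
            refine ⟨A, γ, B, s', hcom, ?_⟩
            rw [hA, hts, ← hμ]
            simp [List.append_assoc]
        · -- B = t' ++ s, wy ++ wz = s ++ ([linv γ] ++ C)
          rcases List.append_eq_append_iff.mp hs.symm with ⟨r, hwyr, hr⟩ | ⟨r, hsr, hr⟩
          · -- wy = s ++ r, [linv γ] ++ C = r ++ wz
            rcases r with _ | ⟨μ, r'⟩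
            · -- r = [] : wy = s, wz = [linv γ] ++ C : GOOD
              rw [List.append_nil] at hwyr
              simp only [List.nil_append] at hr
              refine ⟨t', [], by rw [hA]; simp, by simpa using hr.symm, ?_⟩
              rw [hB, hwyr]
              simp
            · -- r = μ :: r' : linv γ inside wy : pair inside wx ++ wy
              exfalso
              apply hcxy
              have hμ : linv γ = μ := by
                have := congrArg (fun l => l.head?) hr
                simpa using this
              refine ⟨A, γ, t' ++ s, r', ?_, ?_⟩
              · intro β hβ
                exact hcom β (by rw [hB]; exact hβ)
              · rw [hA, hwyr, ← hμ]
                simp [List.append_assoc]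
          · -- s = wy ++ r, wz = r ++ [linv γ] ++ C : GOOD
            refine ⟨t', r, by rw [hA]; simp, by rw [hr]; simp [List.append_assoc], ?_⟩
            rw [hB, hsr]
            simp [List.append_assoc]
    · -- A = wx ++ t : pair inside wy ++ wz
      exfalso
      apply hcyz
      refine ⟨t, γ, B, C, hcom, ?_⟩
      simpa only [← List.append_assoc] using ht
  -- the good case
  have hcom_b₁ : ∀ β ∈ b₁, lcomm F γ β := fun β hβ =>
    hcom β (by rw [hBe]; simp [hβ])
  have hcom_y : ∀ β ∈ wy, lcomm F γ β := fun β hβ =>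
    hcom β (by rw [hBe]; simp [hβ])
  have hcom_b₃ : ∀ β ∈ b₃, lcomm F γ β := fun β hβ =>
    hcom β (by rw [hBe]; simp [hβ])
  have hsy : Commute (sym k F γ) y := by
    rw [← hwy]
    exact commute_sym_wordProd hcom_y
  have hx : x = wordProd k F (A ++ b₁) * sym k F γ := by
    rw [← hwx, hwxe, wordProd_append, wordProd_append, wordProd_singleton,
      wordProd_append]
    rw [mul_assoc, (commute_sym_wordProd hcom_b₁).eq, ← mul_assoc]
  have hz : z = (sym k F γ)⁻¹ * wordProd k F (b₃ ++ C) := by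
    rw [← hwz, hwze, wordProd_append, wordProd_append, wordProd_singleton, sym_linv,
      wordProd_append]
    rw [← (commute_sym_wordProd hcom_b₃).inv_left.eq, mul_assoc]
  have hlenx' : len (wordProd k F (A ++ b₁)) + 1 ≤ len x := by
    have h1 : len (wordProd k F (A ++ b₁)) ≤ (A ++ b₁).length := len_le rfl
    have h2 : (A ++ [γ] ++ b₁).length = len x := by rw [← hwxe, hlx]
    simp only [List.length_append, List.length_singleton] at h1 h2
    omega
  have hlenz' : len (wordProd k F (b₃ ++ C)) + 1 ≤ len z := by
    have h1 : len (wordProd k F (b₃ ++ C)) ≤ (b₃ ++ C).length := len_le rfl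
    have h2 : (b₃ ++ [linv γ] ++ C).length = len z := by rw [← hwze, hlz]
    simp only [List.length_append, List.length_singleton] at h1 h2
    omega
  have hmaineq : wordProd k F (A ++ b₁) * y * wordProd k F (b₃ ++ C) = x * y * z := by
    rw [hx, hz]
    rw [mul_assoc (wordProd k F (A ++ b₁)) (sym k F γ) y, hsy.eq,
      ← mul_assoc (wordProd k F (A ++ b₁)) y (sym k F γ),
      mul_assoc (wordProd k F (A ++ b₁) * y) (sym k F γ), mul_inv_cancel_left]
  refine ⟨wordProd k F (A ++ b₁), wordProd k F (b₃ ++ C), hmaineq, hlenx', hlenz', ?_, ?_⟩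
  · have hle : len (wordProd k F (A ++ b₁) * y) ≤ len (wordProd k F (A ++ b₁)) + len y :=
      len_mul_le _ _
    have hxy2 : x * y = wordProd k F (A ++ b₁) * y * sym k F γ := by
      rw [hx, mul_assoc (wordProd k F (A ++ b₁)) (sym k F γ) y, hsy.eq, ← mul_assoc]
    have hge : len x + len y ≤ len (wordProd k F (A ++ b₁) * y) + 1 := by
      have h3 := len_mul_le (wordProd k F (A ++ b₁) * y) (sym k F γ)
      have hs1 : len (sym k F γ) ≤ 1 := len_sym_le γ
      rw [← hxy2, hxy] at h3
      omega
    omega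
  · have hle : len (y * wordProd k F (b₃ ++ C)) ≤ len y + len (wordProd k F (b₃ ++ C)) :=
      len_mul_le _ _
    have hyz2 : y * z = (sym k F γ)⁻¹ * (y * wordProd k F (b₃ ++ C)) := by
      rw [hz, ← mul_assoc, ← hsy.inv_left.eq, mul_assoc]
    have hge : len y + len z ≤ len (y * wordProd k F (b₃ ++ C)) + 1 := by
      have h3 := len_mul_le (sym k F γ)⁻¹ (y * wordProd k F (b₃ ++ C))
      have hs1 : len (sym k F γ)⁻¹ ≤ 1 := by
        rw [← sym_linv]
        exact len_sym_le (linv γ)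
      rw [← hyz2, hyz] at h3
      omega
    omega

end Machine

theorem stmt0' {k : ℕ} {F : Set (Sym2 (Fin k))} (x y z : Grp k F)
    (hxy : len (x * y) = len x + len y)
    (hyz : len (y * z) = len y + len z) :
    Segment y (x * y * z) := by
  suffices H : ∀ n (x z : Grp k F), len x + len z ≤ n →
      len (x * y) = len x + len y → len (y * z) = len y + len z →
      Segment y (x * y * z) from H (len x + len z) x z le_rfl hxy hyz
  intro n
  induction n with
  | zero =>
      intro x z hn hxy hyz
      have hle : len (x * y * z) ≤ len x + len y + len z := by
        have h1 := len_mul_le (x * y) z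
        have h2 := len_mul_le x y
        omega
      rcases eq_or_lt_of_le hle with heq | hlt
      · exact ⟨x, z, rfl, heq⟩
      · obtain ⟨x', z', -, h1, -, -, -⟩ := main_step hxy hyz hlt
        omega
  | succ n ih =>
      intro x z hn hxy hyz
      have hle : len (x * y * z) ≤ len x + len y + len z := by
        have h1 := len_mul_le (x * y) z
        have h2 := len_mul_le x y
        omega
      rcases eq_or_lt_of_le hle with heq | hlt
      · exact ⟨x, z, rfl, heq⟩
      · obtain ⟨x', z', heq, h1, h2, hxy', hyz'⟩ := main_step hxy hyz hlt
        have hseg := ih x' z' (by omega) hxy' hyz'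
        rwa [heq] at hseg


/-- if `xy = x·y` and `yz = y·z`, then `y` is a segment of `xyz`. -/
theorem stmt0 {k : ℕ} (hk : 1 ≤ k) {F : Set (Sym2 (Fin k))} (x y z : Grp k F)
    (hxy : len (x * y) = len x + len y)
    (hyz : len (y * z) = len y + len z) :
    Segment y (x * y * z) := by
  exact stmt0' x y z hxy hyz

end GraphGroupPaper
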